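/- Let p be a prime with p ≡ 3 (mod 4) and q = p³. The number of pairs (u₁,u₂) ∈ (ℤ/qℤ)² × (ℤ/qℤ)² with ‖u₁ − u₂‖ = ρ equals p⁸ if ρ = 0, equals p⁹ + p⁸ if ρ is a unit or ρ ∈ p²·(ℤ/qℤ)^×, and equals 0 if p ∣ ρ but p² ∤ ρ. -/

import Mathlib

open Finset

namespace DPC

variable {p : ℕ}

lemma p_ne_two (hp4 : p % 4 = 3) : p ≠ 2 := by
  rintro rfl; norm_num at hp4

lemma sum_sq_zero [Fact p.Prime] (hp4 : p % 4 = 3) (a b : ZMod p)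
    (h : a ^ 2 + b ^ 2 = 0) : a = 0 ∧ b = 0 := by
  have hns : ¬ IsSquare (-1 : ZMod p) := by
    rw [ZMod.exists_sq_eq_neg_one_iff]; simp [hp4]
  by_cases hb : b = 0
  · subst hb
    refine ⟨pow_eq_zero_iff (n := 2) (by norm_num) |>.mp (by simpa using h), rfl⟩
  · exfalso
    apply hns
    refine ⟨a * b⁻¹, ?_⟩
    have hbu : b * b⁻¹ = 1 := ZMod.mul_inv_of_unit b (Ne.isUnit hb)
    have h2 : a ^ 2 = - b ^ 2 := by linear_combination h
    linear_combination (-(b⁻¹^2)) * h2 + (b*b⁻¹+1) * hbu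

section R
variable [Fact p.Prime]

/-- reduction map `ZMod (p^3) → ZMod p` -/
def phi (p : ℕ) : ZMod (p^3) →+* ZMod p :=
  ZMod.castHom (dvd_pow_self p (by norm_num)) (ZMod p)

lemma natCast_val_eq (x : ZMod (p^3)) : ((x.val : ℕ) : ZMod (p^3)) = x :=
  ZMod.natCast_rightInverse x

lemma pow_dvd_iff {j : ℕ} (hj : j ≤ 3) (x : ZMod (p^3)) :
    (p : ZMod (p^3))^j ∣ x ↔ p^j ∣ x.val := by
  constructor
  · rintro ⟨s, rfl⟩
    have h1 : (p : ZMod (p^3))^j * s = ((p^j * s.val : ℕ) : ZMod (p^3)) := by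
      push_cast [natCast_val_eq]; ring
    rw [h1, ZMod.val_natCast]
    exact (Nat.dvd_mod_iff (pow_dvd_pow p hj)).mpr (dvd_mul_right _ _)
  · rintro ⟨k, hk⟩
    refine ⟨(k : ZMod (p^3)), ?_⟩
    conv_lhs => rw [← natCast_val_eq x]
    rw [hk]; push_cast; ring

lemma phi_eq (x : ZMod (p^3)) : phi p x = ((x.val : ℕ) : ZMod p) := by
  conv_lhs => rw [← natCast_val_eq x]
  exact map_natCast _ _

lemma dvd_iff_dvd_val (x : ZMod (p^3)) : (p : ZMod (p^3)) ∣ x ↔ p ∣ x.val := by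
  have h := pow_dvd_iff (p := p) (show (1:ℕ) ≤ 3 by norm_num) x
  rwa [pow_one, pow_one] at h

lemma phi_eq_zero_iff (x : ZMod (p^3)) : phi p x = 0 ↔ (p : ZMod (p^3)) ∣ x := by
  rw [phi_eq, ZMod.natCast_eq_zero_iff, dvd_iff_dvd_val]

lemma mul_pi_eq_zero_iff {i : ℕ} (hi : i ≤ 3) (t : ZMod (p^3)) :
    (p : ZMod (p^3))^i * t = 0 ↔ p^(3-i) ∣ t.val := by
  have h1 : (p : ZMod (p^3))^i * t = ((p^i * t.val : ℕ) : ZMod (p^3)) := by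
    push_cast [natCast_val_eq]; ring
  rw [h1, ZMod.natCast_eq_zero_iff]
  have h4 := Nat.mul_dvd_mul_iff_left (a := p^i) (b := p^(3-i)) (c := t.val)
    (pow_pos (Fact.out (p := p.Prime)).pos i)
  rw [← pow_add] at h4
  have h3 : i + (3 - i) = 3 := by omega
  rw [h3] at h4
  exact h4

lemma p_pow_3_eq_zero : ((p : ZMod (p^3)))^3 = 0 := by
  have := (mul_pi_eq_zero_iff (p := p) (le_refl 3) 1)
  simp only [Nat.sub_self, pow_zero] at this
  simpa using this.mpr (one_dvd _)

lemma isUnit_iff_not_dvd (x : ZMod (p^3)) :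
    IsUnit x ↔ ¬ (p : ZMod (p^3)) ∣ x := by
  have hp : p.Prime := Fact.out
  have h1 := ZMod.isUnit_iff_coprime x.val (p^3)
  rw [natCast_val_eq] at h1
  rw [h1, Nat.coprime_pow_right_iff (by norm_num), dvd_iff_dvd_val,
    Nat.coprime_comm]
  exact hp.coprime_iff_not_dvd

end R

section Hensel
variable [Fact p.Prime]

lemma isUnit_two (hp2 : p ≠ 2) : IsUnit (2 : ZMod (p^3)) := by
  have hp : p.Prime := Fact.out
  rw [isUnit_iff_not_dvd, dvd_iff_dvd_val]
  have hlt : 2 < p^3 := by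
    have : 2 ≤ p := hp.two_le
    calc 2 < 2^3 := by norm_num
    _ ≤ p^3 := Nat.pow_le_pow_left this 3
  have h3 : (2 : ZMod (p^3)).val = 2 := by
    have h := ZMod.val_natCast (n := p^3) 2
    rw [Nat.mod_eq_of_lt hlt] at h
    simpa using h
  rw [h3]
  intro hdvd
  exact hp2 ((Nat.prime_dvd_prime_iff_eq hp Nat.prime_two).mp hdvd)

lemma sq_lift (hp2 : p ≠ 2) (b c : ZMod (p^3)) (hb : ¬ (p : ZMod (p^3)) ∣ b)
    (hc : (p : ZMod (p^3)) ∣ (c - b^2)) :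
    ∃ y : ZMod (p^3), y^2 = c ∧ (p : ZMod (p^3)) ∣ (y - b) := by
  have h2b : IsUnit (2*b) := (isUnit_two hp2).mul ((isUnit_iff_not_dvd b).mpr hb)
  obtain ⟨u, hu⟩ := h2b.exists_left_inv
  set y₁ := b - (b^2 - c) * u with hy1
  have h1 : y₁^2 - c = ((b^2 - c) * u)^2 := by
    rw [hy1]; linear_combination (c - b^2) * hu
  obtain ⟨m, hm⟩ := hc
  have hδ : (b^2 - c) * u = (p : ZMod (p^3)) * (-(m*u)) := by
    linear_combination (-u) * hm
  have hy1b : y₁ - b = (p : ZMod (p^3)) * (m*u) := by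
    rw [hy1]; linear_combination u * hm
  have hy1nd : ¬ (p : ZMod (p^3)) ∣ y₁ := by
    rintro ⟨t, ht⟩
    exact hb ⟨t - m*u, by linear_combination ht - hy1b⟩
  have h2y : IsUnit (2*y₁) := (isUnit_two hp2).mul ((isUnit_iff_not_dvd _).mpr hy1nd)
  obtain ⟨v, hv⟩ := h2y.exists_left_inv
  have e1 : y₁^2 - c = (p : ZMod (p^3))^2 * (m*u)^2 := by
    rw [h1, hδ]; ring
  refine ⟨y₁ - (y₁^2 - c)*v, ?_, ?_⟩
  · have h2 : (y₁ - (y₁^2 - c)*v)^2 - c = ((y₁^2 - c)*v)^2 := by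
      linear_combination (c - y₁^2) * hv
    have key : ((y₁^2 - c)*v)^2 = 0 := by
      rw [e1]
      calc ((p : ZMod (p^3))^2 * (m*u)^2 * v)^2
          = ((p : ZMod (p^3)))^3 * ((p : ZMod (p^3)) * (m*u)^4 * v^2) := by ring
      _ = 0 := by rw [p_pow_3_eq_zero]; ring
    linear_combination h2 + key
  · exact ⟨m*u - (p : ZMod (p^3))*(m*u)^2*v, by linear_combination hy1b - v * e1⟩

lemma sq_unique (hp2 : p ≠ 2) (b y y' : ZMod (p^3)) (hb : ¬ (p : ZMod (p^3)) ∣ b)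
    (h : y^2 = y'^2) (h1 : (p : ZMod (p^3)) ∣ (y - b)) (h2 : (p : ZMod (p^3)) ∣ (y' - b)) :
    y = y' := by
  have h2b : IsUnit (2*b) := (isUnit_two hp2).mul ((isUnit_iff_not_dvd b).mpr hb)
  have hsum : ¬ (p : ZMod (p^3)) ∣ (y + y') := by
    intro hd
    have : (p : ZMod (p^3)) ∣ (2*b) := by
      obtain ⟨t1, e1⟩ := h1; obtain ⟨t2, e2⟩ := h2; obtain ⟨t3, e3⟩ := hd
      exact ⟨t3 - t1 - t2, by linear_combination e3 - e1 - e2⟩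
    exact ((isUnit_iff_not_dvd _).mp h2b) this
  have hu : IsUnit (y + y') := (isUnit_iff_not_dvd _).mpr hsum
  have hz : (y - y') * (y + y') = 0 := by linear_combination h
  have := (IsUnit.mul_left_eq_zero hu).mp hz
  exact sub_eq_zero.mp this

end Hensel

section Circ

def circ (n : ℕ) [NeZero n] (c : ZMod n) : Finset (ZMod n × ZMod n) :=
  Finset.univ.filter fun xy => xy.1^2 + xy.2^2 = c

lemma mem_circ {n : ℕ} [NeZero n] {c : ZMod n} {xy : ZMod n × ZMod n} :
    xy ∈ circ n c ↔ xy.1^2 + xy.2^2 = c := by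
  simp [circ]

lemma circ_card_mul {n : ℕ} [NeZero n] {u : ZMod n} (hu : IsUnit u) (α β : ZMod n)
    (hs : α^2 + β^2 = u) (c : ZMod n) :
    (circ n (u*c)).card = (circ n c).card := by
  obtain ⟨w, hw⟩ := hu.exists_left_inv
  have h3 : w * u = 1 := by linear_combination hw
  refine (Finset.card_bij'
    (fun xy _ => (w*(α*xy.1 + β*xy.2), w*(-β*xy.1 + α*xy.2)))
    (fun xy _ => (α*xy.1 - β*xy.2, β*xy.1 + α*xy.2)) ?_ ?_ ?_ ?_)
  · intro a ha
    rw [mem_circ] at ha ⊢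
    linear_combination w^2*(a.1^2+a.2^2)*hs + w^2*u*ha + (w*u+1)*c*h3
  · intro a ha
    rw [mem_circ] at ha ⊢
    linear_combination (a.1^2+a.2^2)*hs + u*ha
  · intro a ha
    rw [Prod.ext_iff]
    exact ⟨by linear_combination w*a.1*hs + a.1*h3, by linear_combination w*a.2*hs + a.2*h3⟩
  · intro a ha
    rw [Prod.ext_iff]
    exact ⟨by linear_combination w*a.1*hs + a.1*h3, by linear_combination w*a.2*hs + a.2*h3⟩

variable [Fact p.Prime]

lemma circ_zero_p (hp4 : p % 4 = 3) : (circ p 0).card = 1 := by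
  have : circ p 0 = {(0,0)} := by
    ext xy
    simp only [mem_circ, Finset.mem_singleton]
    constructor
    · intro h
      obtain ⟨h1, h2⟩ := sum_sq_zero hp4 xy.1 xy.2 h
      exact Prod.ext h1 h2
    · rintro rfl; norm_num
  rw [this, Finset.card_singleton]

lemma sum_circ_card (n : ℕ) [NeZero n] : ∑ c : ZMod n, (circ n c).card = n^2 := by
  have h := Finset.card_eq_sum_card_fiberwise
    (f := fun xy : ZMod n × ZMod n => xy.1^2 + xy.2^2) (s := Finset.univ)
    (t := Finset.univ) (fun x _ => Finset.mem_univ _)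
  have h1 : (Finset.univ : Finset (ZMod n × ZMod n)).card = n * n := by
    rw [Finset.card_univ, Fintype.card_prod, ZMod.card]
  rw [pow_two, ← h1]
  exact h.symm

lemma circ_unit_p (hp4 : p % 4 = 3) {c : ZMod p} (hc : c ≠ 0) :
    (circ p c).card = p + 1 := by
  have hp : p.Prime := Fact.out
  -- all nonzero counts agree with count at 1
  have key : ∀ d : ZMod p, d ≠ 0 → (circ p d).card = (circ p 1).card := by
    intro d hd
    obtain ⟨α, β, hs⟩ := ZMod.sq_add_sq p d
    have := circ_card_mul (Ne.isUnit hd) α β hs 1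
    rwa [mul_one] at this
  have hsum := sum_circ_card p
  rw [← Finset.sum_erase_add _ _ (Finset.mem_univ (0 : ZMod p))] at hsum
  have hconst : ∑ d ∈ Finset.univ.erase (0 : ZMod p), (circ p d).card
      = (p - 1) * (circ p 1).card := by
    rw [Finset.sum_congr rfl (fun d hd => key d (Finset.mem_erase.mp hd).1)]
    rw [Finset.sum_const, smul_eq_mul, Finset.card_erase_of_mem (Finset.mem_univ _),
      Finset.card_univ, ZMod.card]
  rw [hconst, circ_zero_p hp4] at hsum
  -- (p-1) * U + 1 = p^2  ⇒  U = p+1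
  obtain ⟨q, rfl⟩ : ∃ q, p = q + 2 := ⟨p - 2, by omega⟩
  have h2 : (q+1) * (circ (q+2) 1).card = (q+1) * (q+3) := by
    have hq : q + 2 - 1 = q + 1 := by omega
    rw [hq] at hsum
    ring_nf at hsum ⊢
    omega
  have := Nat.eq_of_mul_eq_mul_left (Nat.succ_pos q) h2
  rw [key c hc, this]

lemma val_cast_self {n : ℕ} [NeZero n] (x : ZMod n) : ((x.val : ℕ) : ZMod n) = x :=
  ZMod.natCast_rightInverse x

lemma phi_zero_val (x : ZMod (p^3)) : phi p x = 0 ↔ p ∣ x.val := by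
  rw [phi_eq, ZMod.natCast_eq_zero_iff]

lemma x_eq_p_mul (x : ZMod (p^3)) (h : p ∣ x.val) :
    x = (p : ZMod (p^3)) * ((x.val / p : ℕ) : ZMod (p^3)) := by
  have h2 : (((p * (x.val / p)) : ℕ) : ZMod (p^3)) = x := by
    rw [Nat.mul_div_cancel' h]; exact natCast_val_eq x
  conv_lhs => rw [← h2]
  push_cast; ring

lemma p2_mul_eq_zero_iff_phi (t : ZMod (p^3)) :
    (p : ZMod (p^3))^2 * t = 0 ↔ phi p t = 0 := by
  rw [mul_pi_eq_zero_iff (by norm_num : 2 ≤ 3), phi_zero_val]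
  norm_num

lemma phi_p : phi p ((p : ℕ) : ZMod (p^3)) = 0 := by
  rw [map_natCast, ZMod.natCast_self]

/-- from the circle equation mod `p^3` with RHS killed by `phi`, both coordinates
are divisible by `p`, and then `p^2` divides vals when the sum is exactly 0 -/
lemma coords_p_dvd (hp4 : p % 4 = 3) {x y ρ : ZMod (p^3)} (h : x^2 + y^2 = ρ)
    (hρ : phi p ρ = 0) : phi p x = 0 ∧ phi p y = 0 := by
  have := congrArg (phi p) h
  rw [map_add, map_pow, map_pow, hρ] at this
  exact ⟨(sum_sq_zero hp4 _ _ this).1, (sum_sq_zero hp4 _ _ this).2⟩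

/-- case `ρ = 0` : vals are divisible by `p^2` -/
lemma val_p2_dvd (hp4 : p % 4 = 3) {x y : ZMod (p^3)} (hxx : phi p x = 0)
    (hyy : phi p y = 0) (heq : x^2 + y^2 = 0) : p^2 ∣ x.val := by
  have hp : p.Prime := Fact.out
  obtain hpx := (phi_zero_val x).mp hxx
  obtain hpy := (phi_zero_val y).mp hyy
  have ex := x_eq_p_mul x hpx
  have ey := x_eq_p_mul y hpy
  set A := ((x.val / p : ℕ) : ZMod (p^3)) with hA
  set B := ((y.val / p : ℕ) : ZMod (p^3)) with hB
  have h2 : (p : ZMod (p^3))^2 * (A^2 + B^2) = 0 := by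
    rw [← heq]
    conv_rhs => rw [ex, ey]
    ring
  have h3 := (p2_mul_eq_zero_iff_phi _).mp h2
  rw [map_add, map_pow, map_pow] at h3
  have h4 := (sum_sq_zero hp4 _ _ h3).1
  have h5 : p ∣ x.val / p := by
    have h6 := (phi_zero_val A).mp h4
    rw [hA, ZMod.val_natCast] at h6
    have hlt : x.val / p < p^3 := lt_of_le_of_lt (Nat.div_le_self _ _) (ZMod.val_lt x)
    rwa [Nat.mod_eq_of_lt hlt] at h6
  obtain ⟨k, hk⟩ := h5
  obtain ⟨k', hk'⟩ := hpx
  refine ⟨k, ?_⟩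
  rw [hk'] at hk ⊢
  rw [Nat.mul_div_cancel_left _ hp.pos] at hk
  rw [hk]; ring

/-- case `ρ = 0` : the circle mod `p^3` has `p^2` points -/
lemma circ_R_zero (hp4 : p % 4 = 3) : (circ (p^3) (0 : ZMod (p^3))).card = p^2 := by
  have hp : p.Prime := Fact.out
  rw [show (p:ℕ)^2 = Fintype.card (ZMod p × ZMod p) by
    rw [Fintype.card_prod, ZMod.card]; ring, ← Finset.card_univ]
  refine Finset.card_bij'
    (fun v _ => ((((v.1.val / p^2 : ℕ)) : ZMod p), (((v.2.val / p^2 : ℕ)) : ZMod p)))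
    (fun st _ => (((p^2 * (st.1.val) : ℕ) : ZMod (p^3)), ((p^2 * (st.2.val) : ℕ) : ZMod (p^3))))
    (fun v _ => Finset.mem_univ _) ?_ ?_ ?_
  · intro st _
    rw [mem_circ]
    dsimp only
    have h1 : ((p^2 * (st.1.val) : ℕ) : ZMod (p^3)) = (p:ZMod (p^3))^2 * ((st.1.val : ℕ) : ZMod (p^3)) := by push_cast; ring
    have h2 : ((p^2 * (st.2.val) : ℕ) : ZMod (p^3)) = (p:ZMod (p^3))^2 * ((st.2.val : ℕ) : ZMod (p^3)) := by push_cast; ring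
    rw [h1, h2]
    have h0 := p_pow_3_eq_zero (p := p)
    linear_combination ((p:ZMod (p^3)) * ((st.1.val : ℕ) : ZMod (p^3))^2 + (p:ZMod (p^3)) * ((st.2.val : ℕ) : ZMod (p^3))^2) * h0
  · -- left inverse : j (i v) = v  for v ∈ circ 0
    intro v hv
    rw [mem_circ] at hv
    have hx := coords_p_dvd hp4 hv (map_zero _)
    have hdx : p^2 ∣ v.1.val := val_p2_dvd hp4 hx.1 hx.2 hv
    have hdy : p^2 ∣ v.2.val := val_p2_dvd hp4 hx.2 hx.1 (by linear_combination hv)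
    have key : ∀ x : ZMod (p^3), p^2 ∣ x.val →
        ((p^2 * ((((x.val / p^2 : ℕ)) : ZMod p)).val : ℕ) : ZMod (p^3)) = x := by
      intro x hd
      have hv2 : (((x.val / p^2 : ℕ)) : ZMod p).val = (x.val / p^2) % p := ZMod.val_natCast _ _
      rw [hv2]
      have hlt : x.val / p^2 < p := Nat.div_lt_of_lt_mul (by
        rw [show (p^2*p : ℕ) = p^3 from by ring]; exact ZMod.val_lt x)
      have h8 : p^2 * (x.val / p^2) = x.val := Nat.mul_div_cancel' hd
      rw [Nat.mod_eq_of_lt hlt, h8]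
      exact natCast_val_eq x
    exact Prod.ext (key v.1 hdx) (key v.2 hdy)
  · -- right inverse : i (j st) = st
    intro st _
    have key : ∀ s : ZMod p, ((((p^2 * s.val : ℕ) : ZMod (p^3)).val / p^2 : ℕ) : ZMod p) = s := by
      intro s
      have hlt : p^2 * s.val < p^3 := by
        nlinarith [ZMod.val_lt s, pow_pos hp.pos 2]
      rw [ZMod.val_natCast, Nat.mod_eq_of_lt hlt, Nat.mul_div_cancel_left _ (pow_pos hp.pos 2)]
      exact val_cast_self s
    exact Prod.ext (key st.1) (key st.2)

/-- case `v_p(ρ) = 1` : the circle mod `p^3` is empty -/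
lemma circ_R_v1 (hp4 : p % 4 = 3) (ρ : ZMod (p^3)) (h1 : (p : ZMod (p^3)) ∣ ρ)
    (h2 : ¬ ((p : ZMod (p^3))^2 ∣ ρ)) : (circ (p^3) ρ).card = 0 := by
  rw [Finset.card_eq_zero, Finset.eq_empty_iff_forall_notMem]
  intro v hv
  rw [mem_circ] at hv
  apply h2
  have hφρ : phi p ρ = 0 := (phi_eq_zero_iff ρ).mpr h1
  have hx := coords_p_dvd hp4 hv hφρ
  have ex := x_eq_p_mul v.1 ((phi_zero_val _).mp hx.1)
  have ey := x_eq_p_mul v.2 ((phi_zero_val _).mp hx.2)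
  set A := ((v.1.val / p : ℕ) : ZMod (p^3)) with hA
  set B := ((v.2.val / p : ℕ) : ZMod (p^3)) with hB
  refine ⟨A^2 + B^2, ?_⟩
  rw [← hv]
  conv_lhs => rw [ex, ey]
  ring

lemma digit1 (hp : 0 < p) {a s t : ℕ} (ha : a < p) : (a + p*s + p^2*t)/p = s + p*t := by
  rw [show a + p*s + p^2*t = a + p*(s + p*t) from by ring,
    Nat.add_mul_div_left _ _ hp, Nat.div_eq_of_lt ha, zero_add]

lemma digit2 (hp : 0 < p) {a s t : ℕ} (ha : a < p) (hs : s < p) :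
    (a + p*s + p^2*t)/p^2 = t := by
  have hab2 : a + p*s < p^2 := by nlinarith
  rw [show a + p*s + p^2*t = (a + p*s) + p^2*t from by ring,
    Nat.add_mul_div_left _ _ (pow_pos hp 2), Nat.div_eq_of_lt hab2, zero_add]

lemma digits_recon (x : ℕ) : x % p + p*((x/p)%p) + p^2*(x/p^2) = x := by
  have n3 : x/p/p = x/p^2 := by rw [Nat.div_div_eq_div_mul, pow_two]
  have n2 := Nat.mod_add_div (x/p) p
  have n1 := Nat.mod_add_div x p
  calc x % p + p*((x/p)%p) + p^2*(x/p^2)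
      = x % p + p*((x/p)%p + p*(x/p/p)) := by rw [n3]; ring
    _ = x % p + p*(x/p) := by rw [n2]
    _ = x := n1

lemma val_mod_p_of_phi {x : ZMod (p^3)} {a : ZMod p} (h : phi p x = a) :
    x.val % p = a.val := by
  have h1 : ((x.val : ℕ) : ZMod p) = a := by rw [← phi_eq]; exact h
  rw [← h1, ZMod.val_natCast]

/-- fiber counting for the unit case, when `b ≠ 0` -/
lemma fiber_card_b_ne (hp4 : p % 4 = 3) (e : ZMod (p^3)) (a b : ZMod p) (hb : b ≠ 0)
    (hab : a^2 + b^2 = phi p e) :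
    (Finset.filter (fun v : ZMod (p^3) × ZMod (p^3) => (phi p v.1, phi p v.2) = (a,b))
      (circ (p^3) e)).card = p^2 := by
  classical
  have hp : p.Prime := Fact.out
  have hp2 := p_ne_two hp4
  set B : ZMod (p^3) := ((b.val : ℕ) : ZMod (p^3)) with hB
  have hφB : phi p B = b := by rw [hB, map_natCast]; exact val_cast_self b
  have hBnd : ¬ (p : ZMod (p^3)) ∣ B := by
    intro hd
    exact hb (by rw [← hφB]; exact (phi_eq_zero_iff B).mpr hd)
  have exist : ∀ x : ZMod (p^3), phi p x = a →
      ∃ y, y^2 = e - x^2 ∧ (p : ZMod (p^3)) ∣ (y - B) := by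
    intro x hx
    apply sq_lift hp2 B (e - x^2) hBnd
    rw [← phi_eq_zero_iff, map_sub, map_sub, map_pow, map_pow, hx, hφB]
    linear_combination - hab
  set Y : ZMod (p^3) → ZMod (p^3) := fun x =>
    if h : ∃ y, y^2 = e - x^2 ∧ (p : ZMod (p^3)) ∣ (y - B) then h.choose else 0 with hY
  have hYspec : ∀ x, phi p x = a →
      ((Y x)^2 = e - x^2 ∧ (p : ZMod (p^3)) ∣ (Y x - B)) := by
    intro x hx
    have h := exist x hx
    rw [hY]; simp only [dif_pos h]
    exact h.choose_spec
  have hφY : ∀ x, phi p x = a → phi p (Y x) = b := by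
    intro x hx
    have h := (hYspec x hx).2
    have h2 : phi p (Y x - B) = 0 := (phi_eq_zero_iff _).mpr h
    rw [map_sub, hφB, sub_eq_zero] at h2
    exact h2
  -- the X-map
  have hφX : ∀ st : ZMod p × ZMod p,
      phi p (((a.val + p * st.1.val + p^2 * st.2.val : ℕ) : ZMod (p^3))) = a := by
    intro st
    rw [map_natCast]
    push_cast [ZMod.natCast_self]
    simp [val_cast_self]
  rw [show (p:ℕ)^2 = Fintype.card (ZMod p × ZMod p) by
    rw [Fintype.card_prod, ZMod.card]; ring, ← Finset.card_univ]
  refine Finset.card_bij'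
    (fun v _ => (((v.1.val / p : ℕ) : ZMod p), ((v.1.val / p^2 : ℕ) : ZMod p)))
    (fun st _ =>
      (((a.val + p * st.1.val + p^2 * st.2.val : ℕ) : ZMod (p^3)),
        Y ((a.val + p * st.1.val + p^2 * st.2.val : ℕ) : ZMod (p^3))))
    (fun v _ => Finset.mem_univ _) ?_ ?_ ?_
  · -- j maps into the fiber
    intro st _
    set X : ZMod (p^3) := ((a.val + p * st.1.val + p^2 * st.2.val : ℕ) : ZMod (p^3)) with hX
    have hx := hφX st
    have spec := hYspec X hx
    refine Finset.mem_filter.mpr ⟨mem_circ.mpr ?_, ?_⟩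
    · linear_combination spec.1
    · rw [Prod.mk.injEq]
      exact ⟨hx, hφY X hx⟩
  · -- left inverse
    intro v hv
    obtain ⟨hv1, hv2⟩ := Finset.mem_filter.mp hv
    rw [mem_circ] at hv1
    rw [Prod.mk.injEq] at hv2
    obtain ⟨ha1, hb1⟩ := hv2
    have key : ((a.val + p * (((v.1.val / p : ℕ) : ZMod p)).val
        + p^2 * (((v.1.val / p^2 : ℕ) : ZMod p)).val : ℕ) : ZMod (p^3)) = v.1 := by
      have e1 : (((v.1.val / p : ℕ) : ZMod p)).val = (v.1.val / p) % p := ZMod.val_natCast _ _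
      have hlt : v.1.val / p^2 < p := Nat.div_lt_of_lt_mul (by
        rw [show (p^2*p : ℕ) = p^3 from by ring]; exact ZMod.val_lt v.1)
      have e2 : (((v.1.val / p^2 : ℕ) : ZMod p)).val = v.1.val / p^2 := by
        rw [ZMod.val_natCast, Nat.mod_eq_of_lt hlt]
      rw [e1, e2, ← val_mod_p_of_phi ha1, digits_recon]
      exact natCast_val_eq v.1
    refine Prod.ext key ?_
    dsimp only
    rw [key]
    -- uniqueness of the lifted square root
    have spec := hYspec v.1 ha1
    have h1 : (Y v.1)^2 = v.2^2 := by linear_combination spec.1 - hv1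
    have hdyB : (p : ZMod (p^3)) ∣ (v.2 - B) := by
      rw [← phi_eq_zero_iff, map_sub, hb1, hφB, sub_self]
    exact sq_unique hp2 B (Y v.1) v.2 hBnd h1 spec.2 hdyB
  · -- right inverse
    intro st _
    have hval : (((a.val + p * st.1.val + p^2 * st.2.val : ℕ) : ZMod (p^3))).val
        = a.val + p * st.1.val + p^2 * st.2.val := by
      rw [ZMod.val_natCast]
      apply Nat.mod_eq_of_lt
      nlinarith [ZMod.val_lt a, ZMod.val_lt st.1, ZMod.val_lt st.2, hp.pos]
    have c1 : (((((a.val + p * st.1.val + p^2 * st.2.val : ℕ) : ZMod (p^3))).val / p : ℕ)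
        : ZMod p) = st.1 := by
      rw [hval, digit1 hp.pos (ZMod.val_lt a)]
      push_cast [ZMod.natCast_self]
      simp [val_cast_self]
    have c2 : (((((a.val + p * st.1.val + p^2 * st.2.val : ℕ) : ZMod (p^3))).val / p^2 : ℕ)
        : ZMod p) = st.2 := by
      rw [hval, digit2 hp.pos (ZMod.val_lt a) (ZMod.val_lt st.1)]
      exact val_cast_self st.2
    exact Prod.ext c1 c2

lemma fiber_swap (e : ZMod (p^3)) (a b : ZMod p) :
    (Finset.filter (fun v : ZMod (p^3) × ZMod (p^3) => (phi p v.1, phi p v.2) = (a,b))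
      (circ (p^3) e)).card =
    (Finset.filter (fun v : ZMod (p^3) × ZMod (p^3) => (phi p v.1, phi p v.2) = (b,a))
      (circ (p^3) e)).card := by
  refine Finset.card_bij' (fun v _ => v.swap) (fun v _ => v.swap) ?_ ?_ ?_ ?_
  · intro v hv
    obtain ⟨h1, h2⟩ := Finset.mem_filter.mp hv
    rw [mem_circ] at h1
    rw [Prod.mk.injEq] at h2
    refine Finset.mem_filter.mpr ⟨mem_circ.mpr ?_, ?_⟩
    · show v.swap.1^2 + v.swap.2^2 = e
      simp only [Prod.fst_swap, Prod.snd_swap]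
      linear_combination h1
    · show ((phi p) v.swap.1, (phi p) v.swap.2) = _
      simp only [Prod.fst_swap, Prod.snd_swap]
      rw [Prod.mk.injEq]
      exact ⟨h2.2, h2.1⟩
  · intro v hv
    obtain ⟨h1, h2⟩ := Finset.mem_filter.mp hv
    rw [mem_circ] at h1
    rw [Prod.mk.injEq] at h2
    refine Finset.mem_filter.mpr ⟨mem_circ.mpr ?_, ?_⟩
    · show v.swap.1^2 + v.swap.2^2 = e
      simp only [Prod.fst_swap, Prod.snd_swap]
      linear_combination h1
    · show ((phi p) v.swap.1, (phi p) v.swap.2) = _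
      simp only [Prod.fst_swap, Prod.snd_swap]
      rw [Prod.mk.injEq]
      exact ⟨h2.2, h2.1⟩
  · intro v _; exact Prod.swap_swap v
  · intro v _; exact Prod.swap_swap v

/-- case `ρ` a unit : the circle mod `p^3` has `(p+1)p^2` points -/
lemma circ_R_unit (hp4 : p % 4 = 3) (e : ZMod (p^3)) (he : IsUnit e) :
    (circ (p^3) e).card = (p+1) * p^2 := by
  have hp : p.Prime := Fact.out
  have hebar : phi p e ≠ 0 := (he.map (phi p)).ne_zero
  have hmaps : ∀ v ∈ circ (p^3) e,
      (fun v : ZMod (p^3) × ZMod (p^3) => (phi p v.1, phi p v.2)) v ∈ circ p (phi p e) := by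
    intro v hvv
    rw [mem_circ] at hvv ⊢
    rw [← hvv, map_add, map_pow, map_pow]
  rw [Finset.card_eq_sum_card_fiberwise hmaps]
  have hfib : ∀ ab ∈ circ p (phi p e),
      (Finset.filter (fun v : ZMod (p^3) × ZMod (p^3) =>
        (fun v : ZMod (p^3) × ZMod (p^3) => (phi p v.1, phi p v.2)) v = ab)
        (circ (p^3) e)).card = p^2 := by
    intro ab hab
    obtain ⟨a, b⟩ := ab
    rw [mem_circ] at hab
    by_cases hb : b = 0
    · subst hb
      have ha : a ≠ 0 := by
        intro h; subst h; apply hebar; rw [← hab]; norm_num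
      have := fiber_swap (p := p) e a 0
      calc (Finset.filter (fun v : ZMod (p^3) × ZMod (p^3) =>
            (phi p v.1, phi p v.2) = (a,0)) (circ (p^3) e)).card
          = (Finset.filter (fun v : ZMod (p^3) × ZMod (p^3) =>
            (phi p v.1, phi p v.2) = (0,a)) (circ (p^3) e)).card := this
        _ = p^2 := fiber_card_b_ne hp4 e 0 a ha (by linear_combination hab)
    · exact fiber_card_b_ne hp4 e a b hb hab
  rw [Finset.sum_congr rfl hfib, Finset.sum_const, smul_eq_mul, circ_unit_p hp4 hebar]

lemma key_reassemble (x : ZMod (p^3)) (h : p ∣ x.val) :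
    ((p * (((x.val / p : ℕ) : ZMod p)).val
      + p^2 * (((x.val / p^2 : ℕ) : ZMod p)).val : ℕ) : ZMod (p^3)) = x := by
  have hp : p.Prime := Fact.out
  have e1 : (((x.val / p : ℕ) : ZMod p)).val = (x.val / p) % p := ZMod.val_natCast _ _
  have hlt : x.val / p^2 < p := Nat.div_lt_of_lt_mul (by
    rw [show (p^2*p : ℕ) = p^3 from by ring]; exact ZMod.val_lt x)
  have e2 : (((x.val / p^2 : ℕ) : ZMod p)).val = x.val / p^2 := by
    rw [ZMod.val_natCast, Nat.mod_eq_of_lt hlt]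
  have e3 : x.val % p = 0 := by
    obtain ⟨k, hk⟩ := h; rw [hk]; exact Nat.mul_mod_right p k
  rw [e1, e2]
  have e4 : p * ((x.val/p) % p) + p^2*(x.val/p^2) = x.val := by
    have e5 := digits_recon (p := p) x.val
    rw [e3, zero_add] at e5
    exact e5
  rw [e4]
  exact natCast_val_eq x

/-- case `ρ = p^2 e`, `e` a unit : the circle mod `p^3` has `(p+1)p^2` points -/
lemma circ_R_p2 (hp4 : p % 4 = 3) (e : ZMod (p^3)) (he : IsUnit e) :
    (circ (p^3) ((p : ZMod (p^3))^2 * e)).card = (p+1) * p^2 := by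
  have hp : p.Prime := Fact.out
  have hebar : phi p e ≠ 0 := (he.map (phi p)).ne_zero
  have hphirho : phi p ((p : ZMod (p^3))^2 * e) = 0 := by
    rw [map_mul, map_pow, map_natCast, ZMod.natCast_self]
    ring
  have hcard : ((circ p (phi p e)) ×ˢ (Finset.univ : Finset (ZMod p × ZMod p))).card
      = (p+1) * p^2 := by
    rw [Finset.card_product, circ_unit_p hp4 hebar, Finset.card_univ,
      Fintype.card_prod, ZMod.card]
    ring
  rw [← hcard]
  refine Finset.card_bij'
    (fun v _ => (((((v.1.val / p : ℕ) : ZMod p), ((v.2.val / p : ℕ) : ZMod p))),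
      ((((v.1.val / p^2 : ℕ) : ZMod p), ((v.2.val / p^2 : ℕ) : ZMod p)))))
    (fun ab _ =>
      (((p * ab.1.1.val + p^2 * ab.2.1.val : ℕ) : ZMod (p^3)),
       ((p * ab.1.2.val + p^2 * ab.2.2.val : ℕ) : ZMod (p^3)))) ?_ ?_ ?_ ?_
  · -- i maps into the product
    intro v hv
    rw [mem_circ] at hv
    have hco := coords_p_dvd hp4 hv hphirho
    have hd1 := (phi_zero_val _).mp hco.1
    have hd2 := (phi_zero_val _).mp hco.2
    have ex := x_eq_p_mul v.1 hd1
    have ey := x_eq_p_mul v.2 hd2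
    set A := ((v.1.val / p : ℕ) : ZMod (p^3)) with hA
    set B := ((v.2.val / p : ℕ) : ZMod (p^3)) with hB
    refine Finset.mem_product.mpr ⟨?_, Finset.mem_univ _⟩
    rw [mem_circ]
    have h2 : (p : ZMod (p^3))^2 * (A^2 + B^2 - e) = 0 := by
      rw [← sub_eq_zero] at hv
      rw [← hv]
      conv_rhs => rw [ex, ey]
      ring
    have h3 := (p2_mul_eq_zero_iff_phi _).mp h2
    rw [map_sub, map_add, map_pow, map_pow, sub_eq_zero] at h3
    have hA1 : phi p A = ((v.1.val / p : ℕ) : ZMod p) := by rw [hA, map_natCast]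
    have hB1 : phi p B = ((v.2.val / p : ℕ) : ZMod p) := by rw [hB, map_natCast]
    rw [hA1, hB1] at h3
    exact h3
  · -- j maps into the circle
    intro ab _
    rw [mem_circ]
    obtain ⟨habm, -⟩ := Finset.mem_product.mp ‹_›
    rw [mem_circ] at habm
    set W : ZMod (p^3) := ((ab.1.1.val + p * ab.2.1.val : ℕ) : ZMod (p^3)) with hW
    set V : ZMod (p^3) := ((ab.1.2.val + p * ab.2.2.val : ℕ) : ZMod (p^3)) with hV
    have eX : ((p * ab.1.1.val + p^2 * ab.2.1.val : ℕ) : ZMod (p^3))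
        = (p : ZMod (p^3)) * W := by rw [hW]; push_cast; ring
    have eY : ((p * ab.1.2.val + p^2 * ab.2.2.val : ℕ) : ZMod (p^3))
        = (p : ZMod (p^3)) * V := by rw [hV]; push_cast; ring
    have hφW : phi p W = ab.1.1 := by
      rw [hW, map_natCast]; push_cast [ZMod.natCast_self]; simp [val_cast_self]
    have hφV : phi p V = ab.1.2 := by
      rw [hV, map_natCast]; push_cast [ZMod.natCast_self]; simp [val_cast_self]
    have h2 : (p : ZMod (p^3))^2 * (W^2 + V^2 - e) = 0 := by
      rw [p2_mul_eq_zero_iff_phi, map_sub, map_add, map_pow, map_pow, hφW, hφV,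
        sub_eq_zero]
      exact habm
    dsimp only
    rw [eX, eY]
    linear_combination h2
  · -- left inverse
    intro v hv
    rw [mem_circ] at hv
    have hco := coords_p_dvd hp4 hv hphirho
    have hd1 := (phi_zero_val _).mp hco.1
    have hd2 := (phi_zero_val _).mp hco.2
    exact Prod.ext (key_reassemble v.1 hd1) (key_reassemble v.2 hd2)
  · -- right inverse
    intro ab _
    have hp2pos := pow_pos hp.pos 2
    have key2 : ∀ s t : ZMod p,
        ((((p * s.val + p^2 * t.val : ℕ) : ZMod (p^3))).val / p : ℕ) = s.val + p * t.val := by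
      intro s t
      have hval : (((p * s.val + p^2 * t.val : ℕ) : ZMod (p^3))).val
          = p * s.val + p^2 * t.val := by
        rw [ZMod.val_natCast]
        apply Nat.mod_eq_of_lt
        nlinarith [ZMod.val_lt s, ZMod.val_lt t, hp.pos]
      rw [hval, show p * s.val + p^2 * t.val = 0 + p * s.val + p^2 * t.val from by ring,
        digit1 hp.pos hp.pos]
    have key3 : ∀ s t : ZMod p,
        ((((p * s.val + p^2 * t.val : ℕ) : ZMod (p^3))).val / p^2 : ℕ) = t.val := by
      intro s t
      have hval : (((p * s.val + p^2 * t.val : ℕ) : ZMod (p^3))).val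
          = p * s.val + p^2 * t.val := by
        rw [ZMod.val_natCast]
        apply Nat.mod_eq_of_lt
        nlinarith [ZMod.val_lt s, ZMod.val_lt t, hp.pos]
      rw [hval, show p * s.val + p^2 * t.val = 0 + p * s.val + p^2 * t.val from by ring,
        digit2 hp.pos hp.pos (ZMod.val_lt s)]
    refine Prod.ext (Prod.ext ?_ ?_) (Prod.ext ?_ ?_)
    · show ((((((p * ab.1.1.val + p^2 * ab.2.1.val : ℕ) : ZMod (p^3))).val / p : ℕ)) : ZMod p) = ab.1.1
      rw [key2]
      push_cast [ZMod.natCast_self]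
      simp [val_cast_self]
    · show ((((((p * ab.1.2.val + p^2 * ab.2.2.val : ℕ) : ZMod (p^3))).val / p : ℕ)) : ZMod p) = ab.1.2
      rw [key2]
      push_cast [ZMod.natCast_self]
      simp [val_cast_self]
    · show ((((((p * ab.1.1.val + p^2 * ab.2.1.val : ℕ) : ZMod (p^3))).val / p^2 : ℕ)) : ZMod p) = ab.2.1
      rw [key3]
      exact val_cast_self _
    · show ((((((p * ab.1.2.val + p^2 * ab.2.2.val : ℕ) : ZMod (p^3))).val / p^2 : ℕ)) : ZMod p) = ab.2.2
      rw [key3]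
      exact val_cast_self _

/-- pair-count reduction: number of pairs at distance ρ equals circle count times `p^6` -/
lemma pair_count (ρ : ZMod (p^3)) :
    (Finset.univ.filter
      (fun uv : (ZMod (p^3) × ZMod (p^3)) × (ZMod (p^3) × ZMod (p^3)) =>
        (uv.1.1 - uv.2.1)^2 + (uv.1.2 - uv.2.2)^2 = ρ)).card
    = (circ (p^3) ρ).card * p^6 := by
  have h6 : ((Finset.univ : Finset (ZMod (p^3) × ZMod (p^3)))).card = p^6 := by
    rw [Finset.card_univ, Fintype.card_prod, ZMod.card]; ring
  rw [← h6, ← Finset.card_product]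
  refine Finset.card_bij'
    (fun uv _ => ((uv.1.1 - uv.2.1, uv.1.2 - uv.2.2), uv.2))
    (fun vw _ => ((vw.1.1 + vw.2.1, vw.1.2 + vw.2.2), vw.2)) ?_ ?_ ?_ ?_
  · intro uv huv
    rw [Finset.mem_filter] at huv
    refine Finset.mem_product.mpr ⟨mem_circ.mpr ?_, Finset.mem_univ _⟩
    exact huv.2
  · intro vw hvw
    obtain ⟨h1, -⟩ := Finset.mem_product.mp hvw
    rw [mem_circ] at h1
    refine Finset.mem_filter.mpr ⟨Finset.mem_univ _, ?_⟩
    dsimp only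
    linear_combination h1
  · intro uv _
    refine Prod.ext (Prod.ext ?_ ?_) rfl <;> dsimp only <;> ring
  · intro vw _
    refine Prod.ext (Prod.ext ?_ ?_) rfl <;> dsimp only <;> ring

end Circ

end DPC

theorem distance_pair_count_mod_p_cubed (p : ℕ) (hp : p.Prime) (hp4 : p % 4 = 3)
    (ρ : ZMod (p ^ 3)) :
    (ρ = 0 →
      {uv : (ZMod (p ^ 3) × ZMod (p ^ 3)) × (ZMod (p ^ 3) × ZMod (p ^ 3)) |
        (uv.1.1 - uv.2.1) ^ 2 + (uv.1.2 - uv.2.2) ^ 2 = ρ}.ncard = p ^ 8) ∧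
    ((IsUnit ρ ∨ ∃ e : ZMod (p ^ 3), IsUnit e ∧ ρ = (p : ZMod (p ^ 3)) ^ 2 * e) →
      {uv : (ZMod (p ^ 3) × ZMod (p ^ 3)) × (ZMod (p ^ 3) × ZMod (p ^ 3)) |
        (uv.1.1 - uv.2.1) ^ 2 + (uv.1.2 - uv.2.2) ^ 2 = ρ}.ncard = p ^ 9 + p ^ 8) ∧
    ((p : ZMod (p ^ 3)) ∣ ρ → ¬ ((p : ZMod (p ^ 3)) ^ 2 ∣ ρ) →
      {uv : (ZMod (p ^ 3) × ZMod (p ^ 3)) × (ZMod (p ^ 3) × ZMod (p ^ 3)) |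
        (uv.1.1 - uv.2.1) ^ 2 + (uv.1.2 - uv.2.2) ^ 2 = ρ}.ncard = 0) := by
  haveI : Fact p.Prime := ⟨hp⟩
  have hset : {uv : (ZMod (p ^ 3) × ZMod (p ^ 3)) × (ZMod (p ^ 3) × ZMod (p ^ 3)) |
        (uv.1.1 - uv.2.1) ^ 2 + (uv.1.2 - uv.2.2) ^ 2 = ρ}
      = (↑(Finset.univ.filter
        (fun uv : (ZMod (p^3) × ZMod (p^3)) × (ZMod (p^3) × ZMod (p^3)) =>
          (uv.1.1 - uv.2.1)^2 + (uv.1.2 - uv.2.2)^2 = ρ)) :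
        Set ((ZMod (p ^ 3) × ZMod (p ^ 3)) × (ZMod (p ^ 3) × ZMod (p ^ 3)))) := by
    ext uv; simp
  rw [hset, Set.ncard_coe_finset, DPC.pair_count ρ]
  refine ⟨?_, ?_, ?_⟩
  · rintro rfl
    rw [DPC.circ_R_zero hp4]; ring
  · rintro (hu | ⟨e, he, rfl⟩)
    · rw [DPC.circ_R_unit hp4 ρ hu]; ring
    · rw [DPC.circ_R_p2 hp4 e he]; ring
  · intro h1 h2
    rw [DPC.circ_R_v1 hp4 ρ h1 h2]; ring
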